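/- Let Γ be a simplicial complex and d ≥ 1. Every minimal non-face of Γ has cardinality exactly d+1 (equivalently, the Stanley-Reisner ideal of Γ is minimally generated in degree d+1) if and only if Γ = Δ_d(Γ^{[d]}). -/

import Mathlib

open Finset

namespace ChordedPaper

variable {V : Type*} [DecidableEq V] [Fintype V]

/-- A simplicial complex: a set of finsets (faces) closed under taking subsets.
(The vertices of the complex are the vertices of its faces, so all singletons of
vertices are automatically faces.) -/
def IsComplex (K : Set (Finset V)) : Prop :=
  ∀ F ∈ K, ∀ G ⊆ F, G ∈ K

/-- The vertex set `V(K)` of a complex. -/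
def verts (K : Set (Finset V)) : Set V :=
  {v | ∃ F ∈ K, v ∈ F}

/-- The `d`-dimensional faces (cardinality `d+1`) of `K`. -/
def dfaces (K : Set (Finset V)) (d : ℕ) : Set (Finset V) :=
  {F | F ∈ K ∧ F.card = d + 1}

/-- `K` is pure `d`-dimensional: every face is contained in a `d`-face. -/
def IsPureD (K : Set (Finset V)) (d : ℕ) : Prop :=
  ∀ F ∈ K, ∃ G ∈ dfaces K d, F ⊆ G

/-- The complex generated by a set of facets. -/
def gen (S : Set (Finset V)) : Set (Finset V) :=
  {G | ∃ F ∈ S, G ⊆ F}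

/-- The pure `d`-skeleton `K^{[d]}`: the complex whose facets are the `d`-faces of `K`. -/
def skel (K : Set (Finset V)) (d : ℕ) : Set (Finset V) :=
  gen (dfaces K d)

/-- The induced subcomplex `K_W` on a set `W` of vertices. -/
def induced (K : Set (Finset V)) (W : Set V) : Set (Finset V) :=
  {F | F ∈ K ∧ ↑F ⊆ W}

/-- Two `d`-faces of `S` are adjacent in a `d`-path if they share `d` vertices. -/
def adj (S : Set (Finset V)) (d : ℕ) (F G : Finset V) : Prop :=
  F ∈ S ∧ G ∈ S ∧ (F ∩ G).card = d

/-- `d`-path-connectedness: any two `d`-faces are joined by a `d`-path. -/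
def PathConn (K : Set (Finset V)) (d : ℕ) : Prop :=
  ∀ F ∈ dfaces K d, ∀ G ∈ dfaces K d, Relation.ReflTransGen (adj (dfaces K d) d) F G

/-- A `d`-dimensional cycle: a pure `d`-dimensional, `d`-path-connected complex in which
every `(d-1)`-face lies in an even number of `d`-faces. -/
def IsCycle (Ω : Set (Finset V)) (d : ℕ) : Prop :=
  IsComplex Ω ∧ IsPureD Ω d ∧ (dfaces Ω d).Nonempty ∧ PathConn Ω d ∧
    ∀ f ∈ Ω, Finset.card f = d → Even {F | F ∈ dfaces Ω d ∧ f ⊆ F}.ncard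

/-- A `d`-dimensional cycle in the complex `Γ`. -/
def CycleIn (Γ Ω : Set (Finset V)) (d : ℕ) : Prop :=
  Ω ⊆ Γ ∧ IsCycle Ω d

/-- Face-minimality: no strict subset of the `d`-faces of `Ω` forms a `d`-dimensional cycle. -/
def FaceMinimal (Ω : Set (Finset V)) (d : ℕ) : Prop :=
  ∀ S : Set (Finset V), S ⊂ dfaces Ω d → ¬ IsCycle (gen S) d

/-- Vertex-minimality of a cycle `Ω` in `Γ`: no `d`-dimensional cycle in `Γ` lies on a
strict subset of the vertices of `Ω`. -/
def VertexMinimal (Γ Ω : Set (Finset V)) (d : ℕ) : Prop :=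
  ∀ Ω', CycleIn Γ Ω' d → ¬ (verts Ω' ⊂ verts Ω)

/-- `d`-completeness: every `(d+1)`-subset of the vertex set is a face. -/
def DComplete (K : Set (Finset V)) (d : ℕ) : Prop :=
  ∀ S : Finset V, ↑S ⊆ verts K → S.card = d + 1 → S ∈ K

/-- A chord set `C` of the `d`-dimensional cycle `Ω` in `Γ`. -/
def ChordSet (Γ Ω : Set (Finset V)) (d : ℕ) (C : Set (Finset V)) : Prop :=
  C ⊆ dfaces Γ d ∧ (∀ F ∈ C, F ∉ Ω) ∧ (∀ F ∈ C, ↑F ⊆ verts Ω) ∧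
    ∃ (n : ℕ) (Ωi : Fin n → Set (Finset V)), 2 ≤ n ∧ (∀ i, IsCycle (Ωi i) d) ∧
      (⋃ i, dfaces (Ωi i) d) = dfaces Ω d ∪ C ∧
      (∀ F ∈ C, Even {i | F ∈ dfaces (Ωi i) d}.ncard) ∧
      (∀ F ∈ dfaces Ω d, Odd {i | F ∈ dfaces (Ωi i) d}.ncard) ∧
      (∀ i, (verts (Ωi i)).ncard < (verts Ω).ncard)

/-- `Γ` is `d`-chorded: every face-minimal `d`-dimensional cycle in `Γ` that is not
`d`-complete has a chord set in `Γ`. -/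
def DChorded (Γ : Set (Finset V)) (d : ℕ) : Prop :=
  ∀ Ω, CycleIn Γ Ω d → FaceMinimal Ω d → ¬ DComplete Ω d → ∃ C, ChordSet Γ Ω d C

/-- `Γ` is `d`-cycle-complete: every vertex-minimal `d`-dimensional cycle in `Γ` is
`d`-complete. -/
def DCycleComplete (Γ : Set (Finset V)) (d : ℕ) : Prop :=
  ∀ Ω, CycleIn Γ Ω d → VertexMinimal Γ Ω d → DComplete Ω d

/-- The `d`-closure `Δ_d(K)` of the complex `K`, relative to the vertex set `W`:
it contains the faces of `K`, all subsets of `W` of size at most `d`, and every subset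
`S` of `W` with `|S| > d+1` all of whose `(d+1)`-subsets are faces of `K`. -/
def closure (W : Set V) (K : Set (Finset V)) (d : ℕ) : Set (Finset V) :=
  K ∪ {S | ↑S ⊆ W ∧ S.card ≤ d} ∪
    {S | ↑S ⊆ W ∧ d + 1 < S.card ∧ ∀ T ⊆ S, T.card = d + 1 → T ∈ K}

/-- A `d`-dimensional tree: a pure `d`-dimensional complex with no `d`-dimensional cycles. -/
def IsTree (K : Set (Finset V)) (d : ℕ) : Prop :=
  IsComplex K ∧ IsPureD K d ∧ ∀ Ω, ¬ CycleIn K Ω d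

/-- The unsigned boundary map on chains (appropriate over rings of characteristic 2):
a face is sent to the sum of the faces obtained by deleting one vertex. -/
noncomputable def ubd {R : Type*} [AddCommMonoid R] (c : Finset V →₀ R) : Finset V →₀ R :=
  c.sum fun F a => F.sum fun v => Finsupp.single (F.erase v) a

/-- The signed (oriented) boundary map on chains, the vertices of each face being listed
in increasing order. -/
noncomputable def sbd [LinearOrder V] {R : Type*} [Ring R] (c : Finset V →₀ R) : Finset V →₀ R :=
  c.sum fun F a =>
    F.sum fun v => Finsupp.single (F.erase v) ((-1 : R) ^ (F.filter fun w => w < v).card * a)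

/-- `c` is an `i`-chain on the complex `K`: it is supported on `i`-faces of `K`. -/
def ChainOn {R : Type*} [Zero R] (K : Set (Finset V)) (i : ℕ) (c : Finset V →₀ R) : Prop :=
  ∀ F ∈ c.support, F ∈ K ∧ F.card = i + 1

/-- Vanishing of the reduced simplicial homology `H̃_i(K; R)` for the unsigned boundary
map (this is reduced simplicial homology when `R` has characteristic 2): every `i`-chain
with vanishing boundary (for `i = 0`, the boundary at the empty face is the augmentation ε)
is the boundary of an `(i+1)`-chain. -/
def RedHomZeroU (K : Set (Finset V)) (R : Type*) [AddCommMonoid R] (i : ℕ) : Prop :=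
  ∀ c : Finset V →₀ R, ChainOn K i c → ubd c = 0 →
    ∃ b : Finset V →₀ R, ChainOn K (i + 1) b ∧ ubd b = c

/-- Vanishing of the reduced simplicial homology `H̃_i(K; R)` (oriented chains). -/
def RedHomZeroS [LinearOrder V] (K : Set (Finset V)) (R : Type*) [Ring R] (i : ℕ) : Prop :=
  ∀ c : Finset V →₀ R, ChainOn K i c → sbd c = 0 →
    ∃ b : Finset V →₀ R, ChainOn K (i + 1) b ∧ sbd b = c

/-- Orientability of a `d`-dimensional cycle: there is a choice of signs on its `d`-faces
making the resulting ℤ-chain have zero (oriented) boundary. -/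
def Orientable [LinearOrder V] (Ω : Set (Finset V)) (d : ℕ) : Prop :=
  ∃ c : Finset V →₀ ℤ, ↑c.support = dfaces Ω d ∧
    (∀ F ∈ c.support, c F = 1 ∨ c F = -1) ∧ sbd c = 0

/-- Orientable-vertex-minimality of a cycle `Ω` in `Γ`: no orientable `d`-dimensional
cycle in `Γ` lies on a strict subset of the vertices of `Ω`. -/
def OrientVertexMinimal [LinearOrder V] (Γ Ω : Set (Finset V)) (d : ℕ) : Prop :=
  ∀ Ω', CycleIn Γ Ω' d → Orientable Ω' d → ¬ (verts Ω' ⊂ verts Ω)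

/-- `Γ` is orientably-`d`-cycle-complete: every orientably-vertex-minimal (orientable)
`d`-dimensional cycle in `Γ` is `d`-complete. -/
def OrientDCycleComplete [LinearOrder V] (Γ : Set (Finset V)) (d : ℕ) : Prop :=
  ∀ Ω, CycleIn Γ Ω d → Orientable Ω d → OrientVertexMinimal Γ Ω d → DComplete Ω d

/-- A minimal non-face of `K`: a subset of the vertex set that is not a face, all of whose
proper subsets are faces. -/
def MinNonFace (K : Set (Finset V)) (S : Finset V) : Prop :=
  ↑S ⊆ verts K ∧ S ∉ K ∧ ∀ T ⊂ S, T ∈ K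

lemma exists_minNonFace {V : Type*} [DecidableEq V] [Fintype V] (Γ : Set (Finset V))
    (S : Finset V) (hS : ↑S ⊆ verts Γ) (hnf : S ∉ Γ) :
    ∃ T, T ⊆ S ∧ MinNonFace Γ T := by
  classical
  revert hS hnf
  induction S using Finset.strongInduction with
  | _ S ih =>
    intro hS hnf
    by_cases h : ∀ T ⊂ S, T ∈ Γ
    · exact ⟨S, subset_rfl, hS, hnf, h⟩
    · push_neg at h
      obtain ⟨T, hTS, hT⟩ := h
      obtain ⟨T', hT'sub, hT'⟩ := ih T hTS (fun v hv => hS (hTS.subset hv)) hT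
      exact ⟨T', hT'sub.trans hTS.subset, hT'⟩

lemma skel_subset {V : Type*} [DecidableEq V] [Fintype V] {Γ : Set (Finset V)} {d : ℕ}
    (hcomplex : IsComplex Γ) : skel Γ d ⊆ Γ := by
  rintro S ⟨G, ⟨hG, _⟩, hsub⟩
  exact hcomplex G hG S hsub

/-- Proposition 5.6: the Stanley–Reisner ideal of `Γ` is minimally
generated in degree `d+1` (i.e. every minimal non-face of `Γ` has cardinality `d+1`)
if and only if `Γ = Δ_d(Γ^{[d]})`. -/
theorem minNonFace_iff_closure_skel {V : Type*} [DecidableEq V] [Fintype V]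
    (Γ : Set (Finset V)) (d : ℕ) (hd : 1 ≤ d) (hcomplex : IsComplex Γ) :
    (∀ S : Finset V, MinNonFace Γ S → S.card = d + 1) ↔
      Γ = closure (verts Γ) (skel Γ d) d := by
  classical
  constructor
  · intro hmin
    apply Set.Subset.antisymm
    · -- Γ ⊆ closure
      intro F hF
      have hFv : ↑F ⊆ verts Γ := fun v hv => ⟨F, hF, hv⟩
      rcases le_or_gt F.card d with hle | hgt
      · exact Or.inl (Or.inr ⟨hFv, hle⟩)
      · rcases eq_or_lt_of_le (Nat.succ_le_of_lt hgt) with heq | hlt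
        · exact Or.inl (Or.inl ⟨F, ⟨hF, heq.symm⟩, subset_rfl⟩)
        · exact Or.inr ⟨hFv, hlt, fun T hT hTc =>
            ⟨T, ⟨hcomplex F hF T hT, hTc⟩, subset_rfl⟩⟩
    · -- closure ⊆ Γ
      intro S hS
      simp only [closure, Set.mem_union, Set.mem_setOf_eq] at hS
      rcases hS with (hS | ⟨hSv, hScard⟩) | ⟨hSv, _, hall⟩
      · exact skel_subset hcomplex hS
      · by_contra hnS
        obtain ⟨T, hTS, hT⟩ := exists_minNonFace Γ S hSv hnS
        have := hmin T hT
        have hc := Finset.card_le_card hTS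
        omega
      · by_contra hnS
        obtain ⟨T, hTS, hT⟩ := exists_minNonFace Γ S hSv hnS
        exact hT.2.1 (skel_subset hcomplex (hall T hTS (hmin T hT)))
  · intro heq S hS
    obtain ⟨hSv, hnS, hprop⟩ := hS
    by_contra hne
    rcases Nat.lt_or_ge S.card (d + 1) with hlt | hge
    · -- card ≤ d : S is in the closure, contradiction
      have : S ∈ closure (verts Γ) (skel Γ d) d :=
        Or.inl (Or.inr ⟨hSv, by omega⟩)
      rw [← heq] at this
      exact hnS this
    · have hgt : d + 1 < S.card := lt_of_le_of_ne hge (Ne.symm hne)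
      have : S ∈ closure (verts Γ) (skel Γ d) d := by
        refine Or.inr ⟨hSv, hgt, fun T hTS hTc => ?_⟩
        have hTssubS : T ⊂ S := hTS.ssubset_of_ne (by
          intro h; rw [h] at hTc; omega)
        have hTΓ : T ∈ Γ := hprop T hTssubS
        exact ⟨T, ⟨hTΓ, hTc⟩, subset_rfl⟩
      rw [← heq] at this
      exact hnS this

end ChordedPaper
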